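/- Let d ≥ 1 be an integer, α ∈ (0, d), and let r, p satisfy α ≤ r, 1 < r < p ≤ d. Let γ > 0 satisfy (1+γ)r ≤ p, 1 + γr' ≤ p, and r ≥ 1 + γ, where r' = r/(r-1). Let b : ℝ^d → [0,∞) be measurable, A ≥ 0, assume ∫_B b^p dx ≤ A^p ρ^{d - pα} for every ρ > 0 and every ball B of radius ρ, and assume additionally that b^p is an A_1-weight in the sense that 𝕄(b^p) ≤ C b^p almost everywhere for some constant C. Then almost everywhere on ℝ^d, R_α[(R_α(b^{(1+γ)r}))^{1/(r-1)}] ≤ N b^{γ r'} A^{r'}, where N depends only on α, d, r, p, γ, C. -/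

import Mathlib

open MeasureTheory Metric ENNReal
open scoped FourierTransform

/-- Riesz potential of an `ℝ≥0∞`-valued function:
`R_α g (x) = ∫ g(x+y) |y|^(α-d) dy`. -/
noncomputable def riesz {d : ℕ} (α : ℝ) (g : EuclideanSpace ℝ (Fin d) → ℝ≥0∞)
    (x : EuclideanSpace ℝ (Fin d)) : ℝ≥0∞ :=
  ∫⁻ y, g (x + y) * ENNReal.ofReal (‖y‖ ^ (α - (d : ℝ)))

/-- Riesz potential of a real-valued function. -/
noncomputable def rieszR {d : ℕ} (α : ℝ) (f : EuclideanSpace ℝ (Fin d) → ℝ)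
    (x : EuclideanSpace ℝ (Fin d)) : ℝ :=
  ∫ y, f (x + y) * ‖y‖ ^ (α - (d : ℝ))

/-- Hardy–Littlewood maximal function: sup over balls containing `x`
of the average of `g` over the ball. -/
noncomputable def maxFun {d : ℕ} (g : EuclideanSpace ℝ (Fin d) → ℝ≥0∞)
    (x : EuclideanSpace ℝ (Fin d)) : ℝ≥0∞ :=
  ⨆ (z : EuclideanSpace ℝ (Fin d)) (r : ℝ) (_ : x ∈ ball z r),
    (∫⁻ y in ball z r, g y) / volume (ball z r)

noncomputable def vB (d : ℕ) : ℝ := (volume (ball (0 : EuclideanSpace ℝ (Fin d)) 1)).toReal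

variable {d : ℕ}

lemma vB_pos : 0 < vB d :=
  ENNReal.toReal_pos (measure_ball_pos _ _ one_pos).ne' measure_ball_lt_top.ne

lemma vol_ball (z : EuclideanSpace ℝ (Fin d)) {r : ℝ} (hr : 0 < r) :
    volume (ball z r) = ENNReal.ofReal (r ^ ((d : ℕ) : ℝ) * vB d) := by
  rw [Measure.addHaar_ball_of_pos _ _ hr, finrank_euclideanSpace_fin,
    ENNReal.ofReal_mul (by positivity), Real.rpow_natCast, vB,
    ENNReal.ofReal_toReal measure_ball_lt_top.ne]

lemma ennreal_alg {a v : ℝ≥0∞} (hv0 : v ≠ 0) (hvt : v ≠ ⊤) {θ : ℝ} (hθ0 : 0 ≤ θ) :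
    a ^ θ * v ^ (1 - θ) / v = (a / v) ^ θ := by
  rw [ENNReal.div_rpow_of_nonneg _ _ hθ0, div_eq_mul_inv, div_eq_mul_inv, mul_assoc]
  congr 1
  rw [← ENNReal.rpow_neg_one v, ← ENNReal.rpow_add _ _ hv0 hvt, ← ENNReal.rpow_neg]
  ring_nf

lemma holder_set {b : EuclideanSpace ℝ (Fin d) → ℝ} (hb : Measurable b) (hb0 : ∀ x, 0 ≤ b x)
    {s p : ℝ} (hs : 0 < s) (hsp : s ≤ p) (S : Set (EuclideanSpace ℝ (Fin d))) :
    ∫⁻ y in S, ENNReal.ofReal (b y ^ s) ≤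
      (∫⁻ y in S, ENNReal.ofReal (b y ^ p)) ^ (s / p) * (volume S) ^ (1 - s / p) := by
  have hp : 0 < p := lt_of_lt_of_le hs hsp
  rcases eq_or_lt_of_le hsp with h | h
  · subst h
    rw [div_self hp.ne', ENNReal.rpow_one, sub_self, ENNReal.rpow_zero, mul_one]
  · set P := p / s with hP
    have hP1 : 1 < P := (one_lt_div hs).2 h
    have hconj : P.HolderConjugate (Real.conjExponent P) :=
      Real.HolderConjugate.conjExponent hP1
    have key := ENNReal.lintegral_mul_le_Lp_mul_Lq (volume.restrict S) hconj
      ((hb.pow measurable_const).ennreal_ofReal.aemeasurable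
        (f := fun y => ENNReal.ofReal (b y ^ s)))
      (aemeasurable_const (b := (1 : ℝ≥0∞)))
    simp only [Pi.mul_apply, mul_one, ENNReal.one_rpow] at key
    have e1 : ∀ y : EuclideanSpace ℝ (Fin d),
        ENNReal.ofReal (b y ^ s) ^ P = ENNReal.ofReal (b y ^ p) := by
      intro y
      rw [ENNReal.ofReal_rpow_of_nonneg (Real.rpow_nonneg (hb0 y) s)
        (le_of_lt (lt_trans one_pos hP1)), ← Real.rpow_mul (hb0 y)]
      congr 1
      rw [hP]
      field_simp
    have e2 : 1 / P = s / p := by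
      rw [hP, one_div, inv_div]
    have e3 : 1 / Real.conjExponent P = 1 - s / p := by
      have h1 : P⁻¹ + (Real.conjExponent P)⁻¹ = 1 := by
        rw [hconj.inv_add_inv_eq_inv, inv_one]
      have h2 : P⁻¹ = s / p := by rw [hP, inv_div]
      rw [one_div]
      linarith
    simp only [e1] at key
    rw [lintegral_const, Measure.restrict_apply MeasurableSet.univ, Set.univ_inter,
      one_mul, e2, e3] at key
    exact key

lemma le_maxFun {g : EuclideanSpace ℝ (Fin d) → ℝ≥0∞} {x z : EuclideanSpace ℝ (Fin d)}
    {r : ℝ} (hx : x ∈ ball z r) :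
    (∫⁻ y in ball z r, g y) / volume (ball z r) ≤ maxFun g x :=
  le_iSup_of_le z (le_iSup_of_le r (le_iSup_of_le hx le_rfl))

lemma lint_ball_le_maxFun {g : EuclideanSpace ℝ (Fin d) → ℝ≥0∞} {x z : EuclideanSpace ℝ (Fin d)}
    {r : ℝ} (hx : x ∈ ball z r) :
    ∫⁻ y in ball z r, g y ≤ maxFun g x * volume (ball z r) := by
  have hr : 0 < r := lt_of_le_of_lt dist_nonneg hx
  rw [← ENNReal.div_le_iff (measure_ball_pos _ _ hr).ne' measure_ball_lt_top.ne]
  exact le_maxFun hx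

lemma maxFun_rpow_le {b : EuclideanSpace ℝ (Fin d) → ℝ} (hb : Measurable b)
    (hb0 : ∀ x, 0 ≤ b x) {s p : ℝ} (hs : 0 < s) (hsp : s ≤ p)
    (x : EuclideanSpace ℝ (Fin d)) :
    maxFun (fun y => ENNReal.ofReal (b y ^ s)) x ≤
      (maxFun (fun y => ENNReal.ofReal (b y ^ p)) x) ^ (s / p) := by
  have hp : 0 < p := lt_of_lt_of_le hs hsp
  have hθ0 : 0 ≤ s / p := by positivity
  refine iSup_le fun z => iSup_le fun r => iSup_le fun hx => ?_
  have hr : 0 < r := lt_of_le_of_lt dist_nonneg hx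
  have hv0 : volume (ball z r) ≠ 0 := (measure_ball_pos _ _ hr).ne'
  have hvt : volume (ball z r) ≠ ⊤ := measure_ball_lt_top.ne
  calc (∫⁻ y in ball z r, ENNReal.ofReal (b y ^ s)) / volume (ball z r)
      ≤ ((∫⁻ y in ball z r, ENNReal.ofReal (b y ^ p)) ^ (s / p)
          * (volume (ball z r)) ^ (1 - s / p)) / volume (ball z r) :=
        ENNReal.div_le_div_right (holder_set hb hb0 hs hsp _) _
    _ = ((∫⁻ y in ball z r, ENNReal.ofReal (b y ^ p)) / volume (ball z r)) ^ (s / p) :=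
        ennreal_alg hv0 hvt hθ0
    _ ≤ (maxFun (fun y => ENNReal.ofReal (b y ^ p)) x) ^ (s / p) :=
        ENNReal.rpow_le_rpow (le_maxFun hx) hθ0

lemma ae_zero_of_balls {g : EuclideanSpace ℝ (Fin d) → ℝ≥0∞} (hg : Measurable g)
    (x : EuclideanSpace ℝ (Fin d))
    (h : ∀ n : ℕ, ∫⁻ y in ball x ((n : ℝ) + 1), g y = 0) :
    ∀ᵐ y ∂(volume : Measure (EuclideanSpace ℝ (Fin d))), g y = 0 := by
  rw [ae_iff]
  have hsub : {y | ¬ g y = 0} ⊆ ⋃ n : ℕ, {y | ¬ g y = 0} ∩ ball x ((n : ℝ) + 1) := by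
    intro y hy
    obtain ⟨n, hn⟩ := exists_nat_gt (dist y x)
    exact Set.mem_iUnion.2 ⟨n, hy, mem_ball.2 (hn.trans (by linarith))⟩
  refine measure_mono_null hsub (measure_iUnion_null fun n => ?_)
  have h2 : ∀ᵐ y ∂(volume.restrict (ball x ((n : ℝ) + 1))), g y = 0 :=
    (lintegral_eq_zero_iff hg).mp (h n)
  rw [ae_iff, Measure.restrict_apply₀' measurableSet_ball.nullMeasurableSet] at h2
  exact measure_mono_null (fun y hy => hy) h2

lemma maxFun_zero_ae {g : EuclideanSpace ℝ (Fin d) → ℝ≥0∞} (hg : Measurable g)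
    {x : EuclideanSpace ℝ (Fin d)} (h : maxFun g x = 0) :
    ∀ᵐ y ∂(volume : Measure (EuclideanSpace ℝ (Fin d))), g y = 0 := by
  refine ae_zero_of_balls hg x fun n => ?_
  have hx : x ∈ ball x ((n : ℝ) + 1) := mem_ball_self (by positivity)
  have h3 := lint_ball_le_maxFun (g := g) hx
  rw [h, zero_mul] at h3
  exact le_antisymm h3 zero_le

lemma ae_shift {P : EuclideanSpace ℝ (Fin d) → Prop}
    (h : ∀ᵐ y ∂(volume : Measure (EuclideanSpace ℝ (Fin d))), P y)
    (x : EuclideanSpace ℝ (Fin d)) :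
    ∀ᵐ y ∂(volume : Measure (EuclideanSpace ℝ (Fin d))), P (x + y) := by
  rw [ae_iff] at h ⊢
  have h2 : {y | ¬ P (x + y)} = (fun y => x + y) ⁻¹' {y | ¬ P y} := rfl
  rw [h2, measure_preimage_add]
  exact h

lemma lint_ball_shift {g : EuclideanSpace ℝ (Fin d) → ℝ≥0∞}
    (x : EuclideanSpace ℝ (Fin d)) {c : ℝ} :
    ∫⁻ y in ball (0 : EuclideanSpace ℝ (Fin d)) c, g (x + y) =
      ∫⁻ z in ball x c, g z := by
  have hpre : (fun y => x + y) ⁻¹' (ball x c) = ball (0 : EuclideanSpace ℝ (Fin d)) c := by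
    ext y
    simp [mem_ball, dist_eq_norm, add_sub_cancel_left]
  rw [← hpre]
  exact (measurePreserving_add_left volume x).setLIntegral_comp_preimage_emb
    (MeasurableEquiv.addLeft x).measurableEmbedding g (ball x c)

lemma ann_bound {α : ℝ} (hαd : α < (d : ℝ)) {g : EuclideanSpace ℝ (Fin d) → ℝ≥0∞}
    (hg : Measurable g) (x : EuclideanSpace ℝ (Fin d)) {a c : ℝ} (ha : 0 < a) :
    ∫⁻ y in {y : EuclideanSpace ℝ (Fin d) | a ≤ ‖y‖ ∧ ‖y‖ < c},
        g (x + y) * ENNReal.ofReal (‖y‖ ^ (α - (d : ℝ))) ≤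
      ENNReal.ofReal (a ^ (α - (d : ℝ))) * ∫⁻ z in ball x c, g z := by
  set S : Set (EuclideanSpace ℝ (Fin d)) := {y | a ≤ ‖y‖ ∧ ‖y‖ < c} with hS
  have hgx : Measurable (fun y : EuclideanSpace ℝ (Fin d) => g (x + y)) :=
    hg.comp (measurable_const.add measurable_id)
  calc ∫⁻ y in S, g (x + y) * ENNReal.ofReal (‖y‖ ^ (α - (d : ℝ)))
      ≤ ∫⁻ y in S, g (x + y) * ENNReal.ofReal (a ^ (α - (d : ℝ))) := by
        refine setLIntegral_mono (hgx.mul measurable_const) fun y hy => ?_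
        exact mul_le_mul_right (ENNReal.ofReal_le_ofReal
          (Real.rpow_le_rpow_of_nonpos ha hy.1 (by linarith))) _
    _ = ENNReal.ofReal (a ^ (α - (d : ℝ))) * ∫⁻ y in S, g (x + y) := by
        rw [lintegral_mul_const' _ _ ENNReal.ofReal_ne_top, mul_comm]
    _ ≤ ENNReal.ofReal (a ^ (α - (d : ℝ))) * ∫⁻ y in ball (0 : EuclideanSpace ℝ (Fin d)) c,
          g (x + y) := by
        refine mul_le_mul_right (lintegral_mono_set fun y hy => ?_) _
        exact mem_ball_zero_iff.2 hy.2
    _ = ENNReal.ofReal (a ^ (α - (d : ℝ))) * ∫⁻ z in ball x c, g z := by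
        rw [lint_ball_shift]

lemma cover_near {δ : ℝ} (hδ : 0 < δ) :
    ball (0 : EuclideanSpace ℝ (Fin d)) δ ⊆ {0} ∪
      ⋃ k : ℕ, {y : EuclideanSpace ℝ (Fin d) |
        δ * 2 ^ (-(k:ℝ)-1) ≤ ‖y‖ ∧ ‖y‖ < δ * 2 ^ (-(k:ℝ))} := by
  intro y hy
  rw [mem_ball_zero_iff] at hy
  rcases eq_or_lt_of_le (norm_nonneg y) with h0 | h0
  · left
    simpa using (norm_eq_zero.mp h0.symm)
  right
  have hex : ∃ n : ℕ, δ * 2 ^ (-(n:ℝ)-1) ≤ ‖y‖ := by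
    obtain ⟨n, hn⟩ := exists_pow_lt_of_lt_one (div_pos h0 hδ) (by norm_num : (2⁻¹:ℝ) < 1)
    refine ⟨n, ?_⟩
    have h2 : ((2:ℝ)⁻¹) ^ n = 2 ^ (-(n:ℝ)) := by
      rw [← Real.rpow_natCast (2⁻¹:ℝ) n, ← Real.rpow_neg_one (2:ℝ),
        ← Real.rpow_mul (by norm_num)]
      norm_num
    have h4 : δ * 2 ^ (-(n:ℝ)) < ‖y‖ := by
      rw [← h2]
      calc δ * (2⁻¹:ℝ)^n < δ * (‖y‖/δ) := mul_lt_mul_of_pos_left hn hδ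
        _ = ‖y‖ := by field_simp
    nlinarith [Real.rpow_pos_of_pos (by norm_num : (0:ℝ) < 2) (-(n:ℝ)-1),
      Real.rpow_le_rpow_of_exponent_le (one_le_two (α := ℝ))
        (by linarith : -(n:ℝ)-1 ≤ -(n:ℝ))]
  set k := Nat.find hex with hk
  refine Set.mem_iUnion.2 ⟨k, Nat.find_spec hex, ?_⟩
  rcases Nat.eq_zero_or_pos k with h | h
  · rw [h]
    simpa using hy
  · have hm := Nat.find_min hex (m := k - 1) (by omega)
    push_neg at hm
    have : -((k:ℝ) - 1) - 1 = -(k:ℝ) := by ring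
    have hcast : ((k - 1 : ℕ) : ℝ) = (k:ℝ) - 1 := by
      have : (1:ℕ) ≤ k := h
      push_cast [Nat.cast_sub this]
      ring
    rw [hcast] at hm
    linarith [hm, this ▸ hm]

lemma cover_far {δ : ℝ} (hδ : 0 < δ) :
    {y : EuclideanSpace ℝ (Fin d) | δ ≤ ‖y‖} ⊆
      ⋃ k : ℕ, {y : EuclideanSpace ℝ (Fin d) |
        δ * 2 ^ (k:ℝ) ≤ ‖y‖ ∧ ‖y‖ < δ * 2 ^ ((k:ℝ)+1)} := by
  intro y hy
  have hex : ∃ n : ℕ, ‖y‖ < δ * 2 ^ ((n:ℝ)+1) := by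
    obtain ⟨n, hn⟩ := pow_unbounded_of_one_lt (‖y‖/δ) (by norm_num : (1:ℝ) < 2)
    refine ⟨n, ?_⟩
    have h2 : ((2:ℝ)) ^ n = 2 ^ ((n:ℝ)) := (Real.rpow_natCast 2 n).symm
    have h3 : (2:ℝ) ^ ((n:ℝ)) ≤ 2 ^ ((n:ℝ)+1) :=
      Real.rpow_le_rpow_of_exponent_le one_le_two (by linarith)
    have h5 := (div_lt_iff₀ hδ).mp hn
    nlinarith [h2 ▸ h3]
  set k := Nat.find hex with hk
  refine Set.mem_iUnion.2 ⟨k, ?_, Nat.find_spec hex⟩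
  rcases Nat.eq_zero_or_pos k with h | h
  · rw [h]
    simpa using hy
  · have hm := Nat.find_min hex (m := k - 1) (by omega)
    push_neg at hm
    have hcast : ((k - 1 : ℕ) : ℝ) = (k:ℝ) - 1 := by
      have h1 : (1:ℕ) ≤ k := h
      push_cast [Nat.cast_sub h1]
      ring
    rw [hcast] at hm
    have : (k:ℝ) - 1 + 1 = (k:ℝ) := by ring
    linarith [this ▸ hm]

lemma tsum_ofReal_geom {U q : ℝ} (hU : 0 ≤ U) (hq0 : 0 ≤ q) (hq1 : q < 1) :
    ∑' k : ℕ, ENNReal.ofReal (U * q ^ k) = ENNReal.ofReal (U / (1 - q)) := by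
  have h1 : ∀ k : ℕ, ENNReal.ofReal (U * q ^ k) =
      ENNReal.ofReal U * (ENNReal.ofReal q) ^ k := by
    intro k
    rw [ENNReal.ofReal_mul hU, ENNReal.ofReal_pow hq0]
  simp only [h1]
  rw [ENNReal.tsum_mul_left, ENNReal.tsum_geometric, div_eq_mul_inv,
    ← ENNReal.ofReal_one, ← ENNReal.ofReal_sub _ hq0,
    ← ENNReal.ofReal_inv_of_pos (by linarith), ← ENNReal.ofReal_mul hU]

lemma aux_pow {δ : ℝ} (hδ : 0 < δ) (u v : ℝ) :
    (δ * 2 ^ u) ^ v = δ ^ v * 2 ^ (u * v) := by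
  rw [Real.mul_rpow hδ.le (Real.rpow_nonneg (by norm_num) u),
    ← Real.rpow_mul (by norm_num : (0:ℝ) ≤ 2)]

lemma pow_rpow_comb (k : ℕ) (w : ℝ) : ((2:ℝ) ^ w) ^ k = 2 ^ (w * (k:ℝ)) := by
  rw [← Real.rpow_natCast ((2:ℝ) ^ w) k, ← Real.rpow_mul (by norm_num : (0:ℝ) ≤ 2)]

lemma near_uk {δ α : ℝ} (hδ : 0 < δ) (k : ℕ) :
    (δ * 2 ^ (-(k:ℝ)-1)) ^ (α-(d:ℝ)) * ((δ * 2 ^ (-(k:ℝ))) ^ ((d:ℕ):ℝ) * vB d)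
      = (vB d * 2 ^ ((d:ℝ)-α) * δ ^ α) * ((2:ℝ) ^ (-α)) ^ k := by
  rw [aux_pow hδ, aux_pow hδ, pow_rpow_comb]
  rw [show δ ^ (α-(d:ℝ)) * 2 ^ ((-(k:ℝ)-1)*(α-(d:ℝ)))
        * (δ ^ ((d:ℕ):ℝ) * 2 ^ ((-(k:ℝ))*((d:ℕ):ℝ)) * vB d)
      = vB d * ((δ ^ (α-(d:ℝ)) * δ ^ ((d:ℕ):ℝ))
        * ((2:ℝ) ^ ((-(k:ℝ)-1)*(α-(d:ℝ))) * 2 ^ ((-(k:ℝ))*((d:ℕ):ℝ)))) from by ring]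
  rw [← Real.rpow_add hδ, ← Real.rpow_add (by norm_num : (0:ℝ) < 2)]
  rw [show vB d * 2 ^ ((d:ℝ)-α) * δ ^ α * 2 ^ (-α*(k:ℝ))
      = vB d * (δ ^ α * (2:ℝ) ^ ((d:ℝ)-α + -α*(k:ℝ))) from by
        rw [Real.rpow_add (by norm_num : (0:ℝ) < 2)]; ring]
  congr 2
  · ring
  · ring

lemma vol_zero (hd : 1 ≤ d) : volume ({0} : Set (EuclideanSpace ℝ (Fin d))) = 0 := by
  haveI : Nontrivial (EuclideanSpace ℝ (Fin d)) := by
    refine ⟨0, EuclideanSpace.single ⟨0, hd⟩ 1, fun h => ?_⟩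
    have h2 := congrArg (fun v : EuclideanSpace ℝ (Fin d) => v ⟨0, hd⟩) h.symm
    simp [EuclideanSpace.single_apply] at h2
  exact measure_singleton 0

lemma near_sum (hd : 1 ≤ d) {α : ℝ} (hα0 : 0 < α) (hαd : α < (d:ℝ))
    {g : EuclideanSpace ℝ (Fin d) → ℝ≥0∞} (hg : Measurable g)
    (x : EuclideanSpace ℝ (Fin d)) {δ : ℝ} (hδ : 0 < δ) :
    ∫⁻ y in ball (0 : EuclideanSpace ℝ (Fin d)) δ,
        g (x + y) * ENNReal.ofReal (‖y‖ ^ (α - (d:ℝ))) ≤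
      ENNReal.ofReal ((vB d * 2 ^ ((d:ℝ)-α) * δ ^ α) / (1 - 2 ^ (-α))) * maxFun g x := by
  have hq0 : (0:ℝ) ≤ 2 ^ (-α) := Real.rpow_nonneg (by norm_num) _
  have hq1 : (2:ℝ) ^ (-α) < 1 :=
    Real.rpow_lt_one_of_one_lt_of_neg one_lt_two (by linarith)
  have hU : 0 ≤ vB d * 2 ^ ((d:ℝ)-α) * δ ^ α := by
    have := vB_pos (d := d)
    positivity
  calc ∫⁻ y in ball (0 : EuclideanSpace ℝ (Fin d)) δ,
        g (x + y) * ENNReal.ofReal (‖y‖ ^ (α - (d:ℝ)))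
      ≤ ∫⁻ y in ({0} ∪ ⋃ k : ℕ, {y : EuclideanSpace ℝ (Fin d) |
          δ * 2 ^ (-(k:ℝ)-1) ≤ ‖y‖ ∧ ‖y‖ < δ * 2 ^ (-(k:ℝ))}),
          g (x + y) * ENNReal.ofReal (‖y‖ ^ (α - (d:ℝ))) :=
        lintegral_mono_set (cover_near hδ)
    _ ≤ (∫⁻ y in ({0} : Set (EuclideanSpace ℝ (Fin d))),
          g (x + y) * ENNReal.ofReal (‖y‖ ^ (α - (d:ℝ)))) +
        ∫⁻ y in (⋃ k : ℕ, {y : EuclideanSpace ℝ (Fin d) |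
          δ * 2 ^ (-(k:ℝ)-1) ≤ ‖y‖ ∧ ‖y‖ < δ * 2 ^ (-(k:ℝ))}),
          g (x + y) * ENNReal.ofReal (‖y‖ ^ (α - (d:ℝ))) := lintegral_union_le _ _ _
    _ ≤ 0 + ∑' k : ℕ, ∫⁻ y in {y : EuclideanSpace ℝ (Fin d) |
          δ * 2 ^ (-(k:ℝ)-1) ≤ ‖y‖ ∧ ‖y‖ < δ * 2 ^ (-(k:ℝ))},
          g (x + y) * ENNReal.ofReal (‖y‖ ^ (α - (d:ℝ))) := by
        gcongr
        · exact le_of_eq (setLIntegral_measure_zero _ _ (vol_zero hd))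
        · exact lintegral_iUnion_le _ _
    _ ≤ ∑' k : ℕ, ENNReal.ofReal ((vB d * 2 ^ ((d:ℝ)-α) * δ ^ α) * ((2:ℝ) ^ (-α)) ^ k)
          * maxFun g x := by
        rw [zero_add]
        refine ENNReal.tsum_le_tsum fun k => ?_
        have hak : 0 < δ * 2 ^ (-(k:ℝ)-1) := by positivity
        have hck : 0 < δ * 2 ^ (-(k:ℝ)) := by positivity
        calc ∫⁻ y in {y : EuclideanSpace ℝ (Fin d) |
              δ * 2 ^ (-(k:ℝ)-1) ≤ ‖y‖ ∧ ‖y‖ < δ * 2 ^ (-(k:ℝ))},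
              g (x + y) * ENNReal.ofReal (‖y‖ ^ (α - (d:ℝ)))
            ≤ ENNReal.ofReal ((δ * 2 ^ (-(k:ℝ)-1)) ^ (α - (d:ℝ))) *
                ∫⁻ z in ball x (δ * 2 ^ (-(k:ℝ))), g z := ann_bound hαd hg x hak
          _ ≤ ENNReal.ofReal ((δ * 2 ^ (-(k:ℝ)-1)) ^ (α - (d:ℝ))) *
                (maxFun g x * volume (ball x (δ * 2 ^ (-(k:ℝ))))) :=
              mul_le_mul_right (lint_ball_le_maxFun (mem_ball_self hck)) _
          _ = ENNReal.ofReal ((δ * 2 ^ (-(k:ℝ)-1)) ^ (α - (d:ℝ)) *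
                ((δ * 2 ^ (-(k:ℝ))) ^ ((d:ℕ):ℝ) * vB d)) * maxFun g x := by
              rw [vol_ball _ hck, ENNReal.ofReal_mul (Real.rpow_nonneg hak.le _)]
              ring
          _ = ENNReal.ofReal ((vB d * 2 ^ ((d:ℝ)-α) * δ ^ α) * ((2:ℝ) ^ (-α)) ^ k)
                * maxFun g x := by rw [near_uk hδ]
    _ = ENNReal.ofReal ((vB d * 2 ^ ((d:ℝ)-α) * δ ^ α) / (1 - 2 ^ (-α))) * maxFun g x := by
        rw [ENNReal.tsum_mul_right, tsum_ofReal_geom hU hq0 hq1]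

lemma morrey_real {α p s A ρ : ℝ} (hA : 0 ≤ A) (hρ : 0 < ρ) (hs : 0 < s) (hp : 0 < p) :
    (A ^ p * ρ ^ ((d:ℝ) - p*α)) ^ (s/p) * (ρ ^ ((d:ℕ):ℝ) * vB d) ^ (1 - s/p)
      = vB d ^ (1 - s/p) * A ^ s * ρ ^ ((d:ℝ) - s*α) := by
  have hvB := vB_pos (d := d)
  rw [Real.mul_rpow (Real.rpow_nonneg hA _) (Real.rpow_nonneg hρ.le _),
      Real.mul_rpow (Real.rpow_nonneg hρ.le _) hvB.le,
      ← Real.rpow_mul hA, ← Real.rpow_mul hρ.le, ← Real.rpow_mul hρ.le]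
  rw [show p * (s/p) = s from by field_simp]
  rw [show A ^ s * ρ ^ (((d:ℝ) - p*α) * (s/p)) * (ρ ^ (((d:ℕ):ℝ) * (1 - s/p)) * vB d ^ (1 - s/p))
      = vB d ^ (1 - s/p) * A ^ s *
        (ρ ^ (((d:ℝ) - p*α) * (s/p)) * ρ ^ (((d:ℕ):ℝ) * (1 - s/p))) from by ring,
    ← Real.rpow_add hρ]
  congr 2
  field_simp
  ring

lemma far_uk {δ α s : ℝ} (hδ : 0 < δ) (k : ℕ) :
    (δ * 2 ^ (k:ℝ)) ^ (α-(d:ℝ)) * (δ * 2 ^ ((k:ℝ)+1)) ^ ((d:ℝ) - s*α)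
      = (2 ^ ((d:ℝ) - s*α) * δ ^ (α - s*α)) * ((2:ℝ) ^ (α - s*α)) ^ k := by
  rw [aux_pow hδ, aux_pow hδ, pow_rpow_comb]
  rw [show δ ^ (α-(d:ℝ)) * 2 ^ ((k:ℝ)*(α-(d:ℝ)))
        * (δ ^ ((d:ℝ) - s*α) * 2 ^ (((k:ℝ)+1)*((d:ℝ) - s*α)))
      = (δ ^ (α-(d:ℝ)) * δ ^ ((d:ℝ) - s*α))
        * ((2:ℝ) ^ ((k:ℝ)*(α-(d:ℝ))) * 2 ^ (((k:ℝ)+1)*((d:ℝ) - s*α))) from by ring]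
  rw [← Real.rpow_add hδ, ← Real.rpow_add (by norm_num : (0:ℝ) < 2)]
  rw [show (2:ℝ) ^ ((d:ℝ) - s*α) * δ ^ (α - s*α) * 2 ^ ((α - s*α)*(k:ℝ))
      = δ ^ (α - s*α) * (2:ℝ) ^ ((d:ℝ) - s*α + (α - s*α)*(k:ℝ)) from by
        rw [Real.rpow_add (by norm_num : (0:ℝ) < 2)]; ring]
  congr 2
  · ring
  · ring

lemma ball_morrey (hd : 1 ≤ d) {α p s A : ℝ} (hA : 0 ≤ A)
    {b : EuclideanSpace ℝ (Fin d) → ℝ} (hb : Measurable b) (hb0 : ∀ x, 0 ≤ b x)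
    (hs : 0 < s) (hsp : s ≤ p)
    (hmor : ∀ (x : EuclideanSpace ℝ (Fin d)) (ρ : ℝ), 0 < ρ →
      ∫⁻ y in ball x ρ, ENNReal.ofReal (b y ^ p) ≤
        ENNReal.ofReal (A ^ p * ρ ^ ((d : ℝ) - p * α)))
    (z : EuclideanSpace ℝ (Fin d)) {ρ : ℝ} (hρ : 0 < ρ) :
    ∫⁻ y in ball z ρ, ENNReal.ofReal (b y ^ s) ≤
      ENNReal.ofReal (vB d ^ (1 - s/p) * A ^ s * ρ ^ ((d:ℝ) - s*α)) := by
  have hp : 0 < p := lt_of_lt_of_le hs hsp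
  have hθ0 : 0 ≤ s / p := by positivity
  have hθ1 : 0 ≤ 1 - s / p := by
    have : s / p ≤ 1 := (div_le_one hp).2 hsp
    linarith
  calc ∫⁻ y in ball z ρ, ENNReal.ofReal (b y ^ s)
      ≤ (∫⁻ y in ball z ρ, ENNReal.ofReal (b y ^ p)) ^ (s/p) *
          (volume (ball z ρ)) ^ (1 - s/p) := holder_set hb hb0 hs hsp _
    _ ≤ (ENNReal.ofReal (A ^ p * ρ ^ ((d : ℝ) - p * α))) ^ (s/p) *
          (ENNReal.ofReal (ρ ^ ((d:ℕ):ℝ) * vB d)) ^ (1 - s/p) := by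
        rw [vol_ball z hρ]
        exact mul_le_mul_left (ENNReal.rpow_le_rpow (hmor z ρ hρ) hθ0) _
    _ = ENNReal.ofReal ((A ^ p * ρ ^ ((d : ℝ) - p * α)) ^ (s/p) *
          (ρ ^ ((d:ℕ):ℝ) * vB d) ^ (1 - s/p)) := by
        rw [ENNReal.ofReal_rpow_of_nonneg (by positivity) hθ0,
          ENNReal.ofReal_rpow_of_nonneg
            (mul_nonneg (Real.rpow_nonneg hρ.le _) (vB_pos (d := d)).le) hθ1,
          ← ENNReal.ofReal_mul (by positivity)]
    _ = ENNReal.ofReal (vB d ^ (1 - s/p) * A ^ s * ρ ^ ((d:ℝ) - s*α)) := by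
        rw [morrey_real hA hρ hs hp]

lemma far_sum (hd : 1 ≤ d) {α : ℝ} (hα0 : 0 < α) (hαd : α < (d:ℝ))
    {b : EuclideanSpace ℝ (Fin d) → ℝ} (hb : Measurable b) (hb0 : ∀ x, 0 ≤ b x)
    {s p A : ℝ} (hs1 : 1 < s) (hsp : s ≤ p) (hA : 0 ≤ A)
    (hmor : ∀ (x : EuclideanSpace ℝ (Fin d)) (ρ : ℝ), 0 < ρ →
      ∫⁻ y in ball x ρ, ENNReal.ofReal (b y ^ p) ≤
        ENNReal.ofReal (A ^ p * ρ ^ ((d : ℝ) - p * α)))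
    (x : EuclideanSpace ℝ (Fin d)) {δ : ℝ} (hδ : 0 < δ) :
    ∫⁻ y in {y : EuclideanSpace ℝ (Fin d) | δ ≤ ‖y‖},
        ENNReal.ofReal (b (x + y) ^ s) * ENNReal.ofReal (‖y‖ ^ (α - (d:ℝ))) ≤
      ENNReal.ofReal ((vB d ^ (1 - s/p) * A ^ s * (2 ^ ((d:ℝ) - s*α) * δ ^ (α - s*α)))
        / (1 - 2 ^ (α - s*α))) := by
  have hvB := vB_pos (d := d)
  have he : α - s*α < 0 := by nlinarith
  have hq0 : (0:ℝ) ≤ 2 ^ (α - s*α) := Real.rpow_nonneg (by norm_num) _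
  have hq1 : (2:ℝ) ^ (α - s*α) < 1 :=
    Real.rpow_lt_one_of_one_lt_of_neg one_lt_two he
  have hU : 0 ≤ vB d ^ (1 - s/p) * A ^ s * (2 ^ ((d:ℝ) - s*α) * δ ^ (α - s*α)) := by
    positivity
  have hg : Measurable (fun z : EuclideanSpace ℝ (Fin d) => ENNReal.ofReal (b z ^ s)) :=
    (hb.pow measurable_const).ennreal_ofReal
  calc ∫⁻ y in {y : EuclideanSpace ℝ (Fin d) | δ ≤ ‖y‖},
        ENNReal.ofReal (b (x + y) ^ s) * ENNReal.ofReal (‖y‖ ^ (α - (d:ℝ)))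
      ≤ ∫⁻ y in (⋃ k : ℕ, {y : EuclideanSpace ℝ (Fin d) |
          δ * 2 ^ (k:ℝ) ≤ ‖y‖ ∧ ‖y‖ < δ * 2 ^ ((k:ℝ)+1)}),
          ENNReal.ofReal (b (x + y) ^ s) * ENNReal.ofReal (‖y‖ ^ (α - (d:ℝ))) :=
        lintegral_mono_set (cover_far hδ)
    _ ≤ ∑' k : ℕ, ∫⁻ y in {y : EuclideanSpace ℝ (Fin d) |
          δ * 2 ^ (k:ℝ) ≤ ‖y‖ ∧ ‖y‖ < δ * 2 ^ ((k:ℝ)+1)},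
          ENNReal.ofReal (b (x + y) ^ s) * ENNReal.ofReal (‖y‖ ^ (α - (d:ℝ))) :=
        lintegral_iUnion_le _ _
    _ ≤ ∑' k : ℕ, ENNReal.ofReal ((vB d ^ (1 - s/p) * A ^ s *
          (2 ^ ((d:ℝ) - s*α) * δ ^ (α - s*α))) * ((2:ℝ) ^ (α - s*α)) ^ k) := by
        refine ENNReal.tsum_le_tsum fun k => ?_
        have hak : 0 < δ * 2 ^ (k:ℝ) := by positivity
        have hck : 0 < δ * 2 ^ ((k:ℝ)+1) := by positivity
        calc ∫⁻ y in {y : EuclideanSpace ℝ (Fin d) |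
              δ * 2 ^ (k:ℝ) ≤ ‖y‖ ∧ ‖y‖ < δ * 2 ^ ((k:ℝ)+1)},
              ENNReal.ofReal (b (x + y) ^ s) * ENNReal.ofReal (‖y‖ ^ (α - (d:ℝ)))
            ≤ ENNReal.ofReal ((δ * 2 ^ (k:ℝ)) ^ (α - (d:ℝ))) *
                ∫⁻ z in ball x (δ * 2 ^ ((k:ℝ)+1)), ENNReal.ofReal (b z ^ s) :=
              ann_bound hαd hg x hak
          _ ≤ ENNReal.ofReal ((δ * 2 ^ (k:ℝ)) ^ (α - (d:ℝ))) *
                ENNReal.ofReal (vB d ^ (1 - s/p) * A ^ s *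
                  (δ * 2 ^ ((k:ℝ)+1)) ^ ((d:ℝ) - s*α)) :=
              mul_le_mul_right
                (ball_morrey hd hA hb hb0 (lt_trans one_pos hs1) hsp hmor x hck) _
          _ = ENNReal.ofReal ((vB d ^ (1 - s/p) * A ^ s *
                (2 ^ ((d:ℝ) - s*α) * δ ^ (α - s*α))) * ((2:ℝ) ^ (α - s*α)) ^ k) := by
              rw [← ENNReal.ofReal_mul (Real.rpow_nonneg hak.le _)]
              rw [show (δ * 2 ^ (k:ℝ)) ^ (α - (d:ℝ)) * (vB d ^ (1 - s/p) * A ^ s *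
                  (δ * 2 ^ ((k:ℝ)+1)) ^ ((d:ℝ) - s*α))
                = vB d ^ (1 - s/p) * A ^ s * ((δ * 2 ^ (k:ℝ)) ^ (α - (d:ℝ)) *
                  (δ * 2 ^ ((k:ℝ)+1)) ^ ((d:ℝ) - s*α)) from by ring]
              rw [far_uk hδ]
              ring_nf
    _ = ENNReal.ofReal ((vB d ^ (1 - s/p) * A ^ s * (2 ^ ((d:ℝ) - s*α) * δ ^ (α - s*α)))
          / (1 - 2 ^ (α - s*α))) := tsum_ofReal_geom hU hq0 hq1

lemma b_ae_zero {p : ℝ} (hp : 0 < p) {b : EuclideanSpace ℝ (Fin d) → ℝ}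
    (hb0 : ∀ x, 0 ≤ b x)
    (h : ∀ᵐ y ∂(volume : Measure (EuclideanSpace ℝ (Fin d))),
      ENNReal.ofReal (b y ^ p) = 0) :
    ∀ᵐ y ∂(volume : Measure (EuclideanSpace ℝ (Fin d))), b y = 0 :=
  h.mono fun y hy => by
    by_contra hne
    have hpos : 0 < b y := lt_of_le_of_ne (hb0 y) (Ne.symm hne)
    have h2 := Real.rpow_pos_of_pos hpos p
    rw [ENNReal.ofReal_eq_zero] at hy
    linarith

lemma riesz_ae_zero {α s : ℝ} (hs : 0 < s) {b : EuclideanSpace ℝ (Fin d) → ℝ}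
    (hzero : ∀ᵐ y ∂(volume : Measure (EuclideanSpace ℝ (Fin d))), b y = 0)
    (x : EuclideanSpace ℝ (Fin d)) :
    riesz α (fun z => ENNReal.ofReal (b z ^ s)) x = 0 := by
  have h2 := ae_shift hzero x
  rw [riesz]
  rw [lintegral_congr_ae (g := fun _ => (0:ℝ≥0∞)) (h2.mono fun y hy => by
    rw [hy, Real.zero_rpow hs.ne', ENNReal.ofReal_zero, zero_mul])]
  exact lintegral_zero

lemma key (hd : 1 ≤ d) {α p s C : ℝ} (hα0 : 0 < α) (hαd : α < (d:ℝ))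
    (hs1 : 1 < s) (hsp : s ≤ p) :
    ∃ N : ℝ, 0 < N ∧
      ∀ b : EuclideanSpace ℝ (Fin d) → ℝ, Measurable b → (∀ x, 0 ≤ b x) →
      ∀ A : ℝ, 0 ≤ A →
      (∀ (x : EuclideanSpace ℝ (Fin d)) (ρ : ℝ), 0 < ρ →
        ∫⁻ y in ball x ρ, ENNReal.ofReal (b y ^ p) ≤
          ENNReal.ofReal (A ^ p * ρ ^ ((d : ℝ) - p * α))) →
      (∀ᵐ x ∂(volume : Measure (EuclideanSpace ℝ (Fin d))),
        maxFun (fun y => ENNReal.ofReal (b y ^ p)) x ≤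
          ENNReal.ofReal (C * b x ^ p)) →
      ∀ᵐ x ∂(volume : Measure (EuclideanSpace ℝ (Fin d))),
        riesz α (fun z => ENNReal.ofReal (b z ^ s)) x ≤
          ENNReal.ofReal (N * (A * b x ^ (s - 1))) := by
  have hs0 : (0:ℝ) < s := lt_trans one_pos hs1
  have hp : 0 < p := lt_of_lt_of_le hs0 hsp
  have hvB := vB_pos (d := d)
  have hd1 : (0:ℝ) < 1 - 2 ^ (-α) := by
    have := Real.rpow_lt_one_of_one_lt_of_neg (x := (2:ℝ)) one_lt_two
      (by linarith : -α < 0)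
    linarith
  have hd2 : (0:ℝ) < 1 - 2 ^ (α - s*α) := by
    have := Real.rpow_lt_one_of_one_lt_of_neg (x := (2:ℝ)) one_lt_two
      (by nlinarith : α - s*α < 0)
    linarith
  set K1 : ℝ := vB d * 2 ^ ((d:ℝ)-α) / (1 - 2 ^ (-α)) with hK1
  set K2 : ℝ := vB d ^ (1 - s/p) * 2 ^ ((d:ℝ) - s*α) / (1 - 2 ^ (α - s*α)) with hK2
  have hK1p : 0 < K1 := by rw [hK1]; positivity
  have hK2p : 0 < K2 := by rw [hK2]; positivity
  refine ⟨K1 * (max C 0) ^ (s/p) + K2, by positivity, ?_⟩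
  intro b hb hb0 A hA hmor ha1
  have hgs : Measurable (fun z : EuclideanSpace ℝ (Fin d) => ENNReal.ofReal (b z ^ s)) :=
    (hb.pow measurable_const).ennreal_ofReal
  have hgp : Measurable (fun z : EuclideanSpace ℝ (Fin d) => ENNReal.ofReal (b z ^ p)) :=
    (hb.pow measurable_const).ennreal_ofReal
  rcases eq_or_lt_of_le hA with hA0 | hApos
  · -- A = 0 : b vanishes a.e.
    have hzero : ∀ᵐ y ∂(volume : Measure (EuclideanSpace ℝ (Fin d))), b y = 0 := by
      refine b_ae_zero hp hb0 (ae_zero_of_balls hgp 0 fun n => ?_)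
      refine le_antisymm (le_trans (hmor 0 _ (by positivity)) ?_) zero_le
      rw [← hA0, Real.zero_rpow hp.ne', zero_mul, ENNReal.ofReal_zero]
    exact Filter.Eventually.of_forall fun x => by
      rw [riesz_ae_zero hs0 hzero x]; exact zero_le
  · filter_upwards [ha1] with x hx
    by_cases hbx : b x = 0
    · -- b x = 0 : maximal function vanishes, so b ≡ 0 a.e.
      have h0 : maxFun (fun y => ENNReal.ofReal (b y ^ p)) x = 0 := by
        refine le_antisymm ?_ zero_le
        rw [hbx, Real.zero_rpow hp.ne', mul_zero, ENNReal.ofReal_zero] at hx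
        exact hx
      have hzero := b_ae_zero hp hb0 (maxFun_zero_ae hgp h0)
      rw [riesz_ae_zero hs0 hzero x]
      exact zero_le
    · have hbpos : 0 < b x := lt_of_le_of_ne (hb0 x) (Ne.symm hbx)
      have hAb : 0 < A / b x := div_pos hApos hbpos
      set δ : ℝ := (A / b x) ^ (1/α) with hδdef
      have hδ : 0 < δ := Real.rpow_pos_of_pos hAb _
      have hδα : δ ^ α = A / b x := by
        rw [hδdef, ← Real.rpow_mul hAb.le, one_div, inv_mul_cancel₀ hα0.ne',
          Real.rpow_one]
      have hδe : δ ^ (α - s*α) = (A / b x) ^ (1 - s) := by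
        rw [hδdef, ← Real.rpow_mul hAb.le]
        congr 1
        field_simp
      have hbs : A / b x * b x ^ s = A * b x ^ (s-1) := by
        rw [Real.rpow_sub hbpos, Real.rpow_one]
        field_simp
      have hAs : A ^ s * (A / b x) ^ (1 - s) = A * b x ^ (s-1) := by
        rw [Real.div_rpow hA (hb0 x), div_eq_mul_inv, ← Real.rpow_neg hbpos.le,
          show A ^ s * (A ^ (1-s) * b x ^ (-(1-s))) =
            (A ^ s * A ^ (1-s)) * b x ^ (-(1-s)) from by ring,
          ← Real.rpow_add hApos, show s + (1-s) = 1 from by ring, Real.rpow_one,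
          show -(1-s) = s-1 from by ring]
      -- split the Riesz potential
      have hcompl : (ball (0 : EuclideanSpace ℝ (Fin d)) δ)ᶜ =
          {y : EuclideanSpace ℝ (Fin d) | δ ≤ ‖y‖} := by
        ext y
        simp [mem_ball_zero_iff, not_lt]
      have hsplit : riesz α (fun z => ENNReal.ofReal (b z ^ s)) x =
          (∫⁻ y in ball (0 : EuclideanSpace ℝ (Fin d)) δ,
            ENNReal.ofReal (b (x + y) ^ s) * ENNReal.ofReal (‖y‖ ^ (α - (d:ℝ)))) +
          ∫⁻ y in {y : EuclideanSpace ℝ (Fin d) | δ ≤ ‖y‖},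
            ENNReal.ofReal (b (x + y) ^ s) * ENNReal.ofReal (‖y‖ ^ (α - (d:ℝ))) := by
        rw [riesz, ← lintegral_add_compl _ (measurableSet_ball
          (x := (0 : EuclideanSpace ℝ (Fin d))) (ε := δ)), hcompl]
      rw [hsplit]
      -- near part
      have hnear : (∫⁻ y in ball (0 : EuclideanSpace ℝ (Fin d)) δ,
            ENNReal.ofReal (b (x + y) ^ s) * ENNReal.ofReal (‖y‖ ^ (α - (d:ℝ)))) ≤
          ENNReal.ofReal (K1 * (max C 0) ^ (s/p) * (A * b x ^ (s-1))) := by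
        calc (∫⁻ y in ball (0 : EuclideanSpace ℝ (Fin d)) δ,
              ENNReal.ofReal (b (x + y) ^ s) * ENNReal.ofReal (‖y‖ ^ (α - (d:ℝ))))
            ≤ ENNReal.ofReal ((vB d * 2 ^ ((d:ℝ)-α) * δ ^ α) / (1 - 2 ^ (-α))) *
              maxFun (fun z => ENNReal.ofReal (b z ^ s)) x :=
              near_sum hd hα0 hαd hgs x hδ
          _ ≤ ENNReal.ofReal ((vB d * 2 ^ ((d:ℝ)-α) * δ ^ α) / (1 - 2 ^ (-α))) *
              ENNReal.ofReal ((max C 0) ^ (s/p) * b x ^ s) := by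
              refine mul_le_mul_right ?_ _
              calc maxFun (fun z => ENNReal.ofReal (b z ^ s)) x
                  ≤ (maxFun (fun z => ENNReal.ofReal (b z ^ p)) x) ^ (s/p) :=
                    maxFun_rpow_le hb hb0 hs0 hsp x
                _ ≤ (ENNReal.ofReal ((max C 0) * b x ^ p)) ^ (s/p) := by
                    refine ENNReal.rpow_le_rpow (le_trans hx ?_) (by positivity)
                    exact ENNReal.ofReal_le_ofReal
                      (mul_le_mul_of_nonneg_right (le_max_left C 0)
                        (Real.rpow_nonneg (hb0 x) p))
                _ = ENNReal.ofReal ((max C 0) ^ (s/p) * b x ^ s) := by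
                    rw [ENNReal.ofReal_rpow_of_nonneg
                      (mul_nonneg (le_max_right C 0) (Real.rpow_nonneg (hb0 x) p))
                      (by positivity),
                      Real.mul_rpow (le_max_right C 0) (Real.rpow_nonneg (hb0 x) p),
                      ← Real.rpow_mul (hb0 x)]
                    congr 2
                    field_simp
          _ = ENNReal.ofReal (K1 * (max C 0) ^ (s/p) * (A * b x ^ (s-1))) := by
              rw [← ENNReal.ofReal_mul (by positivity)]
              congr 1
              rw [hδα, show vB d * 2 ^ ((d:ℝ)-α) * (A / b x) / (1 - 2 ^ (-α)) *
                ((max C 0) ^ (s/p) * b x ^ s) = (vB d * 2 ^ ((d:ℝ)-α) / (1 - 2 ^ (-α)))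
                * (max C 0) ^ (s/p) * (A / b x * b x ^ s) from by ring, hbs, hK1]
      -- far part
      have hfar : (∫⁻ y in {y : EuclideanSpace ℝ (Fin d) | δ ≤ ‖y‖},
            ENNReal.ofReal (b (x + y) ^ s) * ENNReal.ofReal (‖y‖ ^ (α - (d:ℝ)))) ≤
          ENNReal.ofReal (K2 * (A * b x ^ (s-1))) := by
        refine le_trans (far_sum hd hα0 hαd hb hb0 hs1 hsp hA hmor x hδ) ?_
        refine ENNReal.ofReal_le_ofReal (le_of_eq ?_)
        rw [hδe, show vB d ^ (1 - s/p) * A ^ s * (2 ^ ((d:ℝ) - s*α) * (A / b x) ^ (1-s))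
            / (1 - 2 ^ (α - s*α)) = (vB d ^ (1 - s/p) * 2 ^ ((d:ℝ) - s*α)
            / (1 - 2 ^ (α - s*α))) * (A ^ s * (A / b x) ^ (1-s)) from by ring, hAs, hK2]
      calc (∫⁻ y in ball (0 : EuclideanSpace ℝ (Fin d)) δ,
            ENNReal.ofReal (b (x + y) ^ s) * ENNReal.ofReal (‖y‖ ^ (α - (d:ℝ)))) +
          ∫⁻ y in {y : EuclideanSpace ℝ (Fin d) | δ ≤ ‖y‖},
            ENNReal.ofReal (b (x + y) ^ s) * ENNReal.ofReal (‖y‖ ^ (α - (d:ℝ)))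
          ≤ ENNReal.ofReal (K1 * (max C 0) ^ (s/p) * (A * b x ^ (s-1))) +
            ENNReal.ofReal (K2 * (A * b x ^ (s-1))) := add_le_add hnear hfar
        _ = ENNReal.ofReal ((K1 * (max C 0) ^ (s/p) + K2) * (A * b x ^ (s-1))) := by
            rw [← ENNReal.ofReal_add (by positivity) (by positivity)]
            congr 1
            ring

/-- **Key estimate (0.4).** Under the Morrey condition and the `A_1` assumption
`𝕄(b^p) ≤ C b^p` a.e., one has a.e.
`R_α[(R_α(b^((1+γ)r)))^(1/(r-1))] ≤ N b^(γr') A^(r')` with `N = N(α,d,r,p,γ,C)`. -/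
theorem iterated_riesz_bound
    (d : ℕ) (hd : 1 ≤ d) (α r p : ℝ) (hα0 : 0 < α) (hαd : α < d)
    (hαr : α ≤ r) (hr : 1 < r) (hrp : r < p) (hpd : p ≤ d)
    (γ r' : ℝ) (hγ : 0 < γ) (hr' : r' = r / (r - 1))
    (hγ1 : (1 + γ) * r ≤ p) (hγ2 : 1 + γ * r' ≤ p) (hγ3 : 1 + γ ≤ r)
    (C : ℝ) :
    ∃ N : ℝ, 0 < N ∧
      ∀ b : EuclideanSpace ℝ (Fin d) → ℝ, Measurable b → (∀ x, 0 ≤ b x) →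
      ∀ A : ℝ, 0 ≤ A →
      (∀ (x : EuclideanSpace ℝ (Fin d)) (ρ : ℝ), 0 < ρ →
        ∫⁻ y in ball x ρ, ENNReal.ofReal (b y ^ p) ≤
          ENNReal.ofReal (A ^ p * ρ ^ ((d : ℝ) - p * α))) →
      (∀ᵐ x ∂(volume : Measure (EuclideanSpace ℝ (Fin d))),
        maxFun (fun y => ENNReal.ofReal (b y ^ p)) x ≤
          ENNReal.ofReal (C * b x ^ p)) →
      ∀ᵐ x ∂(volume : Measure (EuclideanSpace ℝ (Fin d))),
        riesz α (fun y =>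
            (riesz α (fun z => ENNReal.ofReal (b z ^ ((1 + γ) * r))) y) ^
              (1 / (r - 1))) x ≤
          ENNReal.ofReal (N * b x ^ (γ * r') * A ^ r') := by
  have hr1 : (0:ℝ) < r - 1 := by linarith
  have hr'pos : 0 < r' := by rw [hr']; positivity
  have he0 : (0:ℝ) < 1/(r-1) := by positivity
  have hp : (0:ℝ) < p := by linarith
  have hs₁1 : 1 < (1 + γ) * r := by nlinarith
  have hs₂1 : 1 < 1 + γ * r' := by nlinarith
  obtain ⟨N₁, hN₁, H₁⟩ := key (C := C) hd hα0 hαd hs₁1 hγ1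
  obtain ⟨N₂, hN₂, H₂⟩ := key (C := C) hd hα0 hαd hs₂1 hγ2
  refine ⟨N₁ ^ (1/(r-1)) * N₂, by positivity, ?_⟩
  intro b hb hb0 A hA hmor ha1
  have hgp : Measurable (fun z : EuclideanSpace ℝ (Fin d) => ENNReal.ofReal (b z ^ p)) :=
    (hb.pow measurable_const).ennreal_ofReal
  rcases eq_or_lt_of_le hA with hA0 | hApos
  · -- A = 0 : b vanishes a.e. and everything is zero
    have hzero : ∀ᵐ y ∂(volume : Measure (EuclideanSpace ℝ (Fin d))), b y = 0 := by
      refine b_ae_zero hp hb0 (ae_zero_of_balls hgp 0 fun n => ?_)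
      refine le_antisymm (le_trans (hmor 0 _ (by positivity)) ?_) zero_le
      rw [← hA0, Real.zero_rpow hp.ne', zero_mul, ENNReal.ofReal_zero]
    refine Filter.Eventually.of_forall fun x => ?_
    have hin : ∀ y, riesz α (fun z => ENNReal.ofReal (b z ^ ((1 + γ) * r))) y = 0 :=
      fun y => riesz_ae_zero (by positivity) hzero y
    have hz : riesz α (fun y =>
        (riesz α (fun z => ENNReal.ofReal (b z ^ ((1 + γ) * r))) y) ^ (1 / (r - 1))) x
        = 0 := by
      rw [riesz]
      have he0' : (0:ℝ) < (r-1)⁻¹ := by positivity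
      simp [hin, ENNReal.zero_rpow_of_pos he0, ENNReal.zero_rpow_of_pos he0']
    rw [hz]
    exact zero_le
  · have h1 := H₁ b hb hb0 A hA hmor ha1
    have h2 := H₂ b hb hb0 A hA hmor ha1
    have hc0 : (0:ℝ) ≤ (N₁ * A) ^ (1/(r-1)) := Real.rpow_nonneg (by positivity) _
    have h3 : ∀ᵐ y ∂(volume : Measure (EuclideanSpace ℝ (Fin d))),
        (riesz α (fun z => ENNReal.ofReal (b z ^ ((1 + γ) * r))) y) ^ (1 / (r - 1)) ≤
          ENNReal.ofReal ((N₁ * A) ^ (1/(r-1)) * b y ^ (1 + γ * r')) := by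
      filter_upwards [h1] with y hy
      calc (riesz α (fun z => ENNReal.ofReal (b z ^ ((1 + γ) * r))) y) ^ (1 / (r - 1))
          ≤ (ENNReal.ofReal (N₁ * (A * b y ^ ((1 + γ) * r - 1)))) ^ (1 / (r - 1)) :=
            ENNReal.rpow_le_rpow hy he0.le
        _ = ENNReal.ofReal ((N₁ * A) ^ (1/(r-1)) * b y ^ (1 + γ * r')) := by
            rw [ENNReal.ofReal_rpow_of_nonneg
              (mul_nonneg hN₁.le (mul_nonneg hA (Real.rpow_nonneg (hb0 y) _))) he0.le]
            congr 1
            rw [show N₁ * (A * b y ^ ((1 + γ) * r - 1)) =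
                (N₁ * A) * b y ^ ((1 + γ) * r - 1) from by ring,
              Real.mul_rpow (by positivity) (Real.rpow_nonneg (hb0 y) _),
              ← Real.rpow_mul (hb0 y)]
            congr 1
            rw [hr']
            field_simp
            ring
    filter_upwards [h2] with x hx2
    calc riesz α (fun y =>
          (riesz α (fun z => ENNReal.ofReal (b z ^ ((1 + γ) * r))) y) ^ (1 / (r - 1))) x
        ≤ riesz α (fun y =>
            ENNReal.ofReal ((N₁ * A) ^ (1/(r-1)) * b y ^ (1 + γ * r'))) x := by
          rw [riesz, riesz]
          refine lintegral_mono_ae ?_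
          filter_upwards [ae_shift h3 x] with y hy
          exact mul_le_mul_left hy _
      _ = ENNReal.ofReal ((N₁ * A) ^ (1/(r-1))) *
            riesz α (fun z => ENNReal.ofReal (b z ^ (1 + γ * r'))) x := by
          rw [riesz, riesz, ← lintegral_const_mul' _ _ ENNReal.ofReal_ne_top]
          exact lintegral_congr fun y => by
            rw [ENNReal.ofReal_mul hc0, mul_assoc]
      _ ≤ ENNReal.ofReal ((N₁ * A) ^ (1/(r-1))) *
            ENNReal.ofReal (N₂ * (A * b x ^ (1 + γ * r' - 1))) := mul_le_mul_right hx2 _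
      _ = ENNReal.ofReal (N₁ ^ (1/(r-1)) * N₂ * b x ^ (γ * r') * A ^ r') := by
          rw [← ENNReal.ofReal_mul hc0]
          congr 1
          have hAe : A ^ (1/(r-1)) * A = A ^ r' := by
            nth_rewrite 2 [← Real.rpow_one A]
            rw [← Real.rpow_add hApos, hr']
            congr 1
            field_simp
            ring
          rw [show (1:ℝ) + γ * r' - 1 = γ * r' from by ring,
            Real.mul_rpow hN₁.le hA,
            show N₁ ^ (1/(r-1)) * A ^ (1/(r-1)) * (N₂ * (A * b x ^ (γ * r'))) =
              N₁ ^ (1/(r-1)) * N₂ * b x ^ (γ * r') * (A ^ (1/(r-1)) * A) from by ring,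
            hAe]
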